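/- Let t : G ⟶ R be a natural transformation between endofunctors of a category A such that every component t_a is a monomorphism, and assume that R preserves equalisers. Then G preserves equalisers if and only if for every regular monomorphism i : a₀ → a in A, the square with sides G(i) : G(a₀) → G(a), t_{a₀} : G(a₀) → R(a₀), t_a : G(a) → R(a) and R(i) : R(a₀) → R(a) is a pullback. -/

import Mathlib

open CategoryTheory CategoryTheory.Limits

/-- **Proposition 2.3 (a)⇔(b).** Let `t : G ⟶ R` be a natural transformation between
endofunctors of `A` whose components are all monomorphisms, and assume `R` preserves
equalisers.  Then `G` preserves equalisers if and only if for every regular monomorphism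
`i : a₀ ⟶ a` the naturality square of `t` at `i` is a pullback. -/
theorem prop_2_3_ab {A : Type*} [Category A] {G R : A ⥤ A} (t : G ⟶ R)
    [∀ a : A, Mono (t.app a)]
    [PreservesLimitsOfShape WalkingParallelPair R] :
    PreservesLimitsOfShape WalkingParallelPair G ↔
      ∀ {a₀ a : A} (i : a₀ ⟶ a), RegularMono i →
        IsPullback (G.map i) (t.app a₀) (t.app a) (R.map i) := by
  constructor
  · intro hG a₀ a i hi
    -- `i` is the equaliser of `hi.left, hi.right : a ⟶ hi.Z`
    have hGL : IsLimit (Fork.ofι (G.map i) (by simp only [← G.map_comp, hi.w]) :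
        Fork (G.map hi.left) (G.map hi.right)) :=
      isLimitForkMapOfIsLimit G hi.w hi.isLimit
    have hRL : IsLimit (Fork.ofι (R.map i) (by simp only [← R.map_comp, hi.w]) :
        Fork (R.map hi.left) (R.map hi.right)) :=
      isLimitForkMapOfIsLimit R hi.w hi.isLimit
    have monoGi : Mono (G.map i) := mono_of_isLimit_fork hGL
    have monoRi : Mono (R.map i) := mono_of_isLimit_fork hRL
    have comm : G.map i ≫ t.app a = t.app a₀ ≫ R.map i := t.naturality i
    -- every pullback cone's first projection equalises `G.map left` and `G.map right`
    have key : ∀ s : PullbackCone (t.app a) (R.map i),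
        s.fst ≫ G.map hi.left = s.fst ≫ G.map hi.right := by
      intro s
      refine (cancel_mono (t.app hi.Z)).1 ?_
      rw [Category.assoc, Category.assoc, t.naturality, t.naturality,
        ← Category.assoc, ← Category.assoc, s.condition, Category.assoc, Category.assoc,
        ← R.map_comp, ← R.map_comp, hi.w]
    let l : ∀ s : PullbackCone (t.app a) (R.map i), s.pt ⟶ G.obj a₀ :=
      fun s => (Fork.IsLimit.lift' hGL s.fst (key s)).1
    have hl : ∀ s, l s ≫ G.map i = s.fst :=
      fun s => (Fork.IsLimit.lift' hGL s.fst (key s)).2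
    refine IsPullback.of_isLimit (c := PullbackCone.mk (G.map i) (t.app a₀) comm) ?_
    refine PullbackCone.IsLimit.mk comm l (fun s => hl s) (fun s => ?_) (fun s m h₁ h₂ => ?_)
    · -- second projection: cancel the mono `R.map i`
      refine (cancel_mono (R.map i)).1 ?_
      rw [Category.assoc, ← comm, ← Category.assoc, hl, s.condition]
    · refine (cancel_mono (G.map i)).1 ?_
      rw [h₁, hl]
  · intro hpb
    constructor
    intro K
    set f := K.map WalkingParallelPairHom.left
    set g := K.map WalkingParallelPairHom.right
    have : PreservesLimit (parallelPair f g) G := by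
      constructor
      intro c hc
      -- view `c` as a fork
      let c' : Fork f g := c
      have hc' : IsLimit (Fork.ofι c'.ι c'.condition) := hc.ofIsoLimit (Fork.isoForkOfι c')
      have hreg : RegularMono c'.ι := ⟨_, f, g, c'.condition, hc'⟩
      have P := hpb c'.ι hreg
      have hRL : IsLimit (Fork.ofι (R.map c'.ι) (by simp only [← R.map_comp, c'.condition]) :
          Fork (R.map f) (R.map g)) :=
        isLimitForkMapOfIsLimit R c'.condition hc'
      have monoRi : Mono (R.map c'.ι) := mono_of_isLimit_fork hRL
      have monoGi : Mono (G.map c'.ι) := by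
        have w' : G.map c'.ι ≫ t.app ((parallelPair f g).obj WalkingParallelPair.zero) =
            t.app c'.pt ≫ R.map c'.ι := P.w
        have h2 : Mono (t.app c'.pt ≫ R.map c'.ι) := mono_comp _ _
        rw [← w'] at h2
        haveI : Mono (G.map c'.ι ≫ t.app (K.obj WalkingParallelPair.zero)) := h2
        exact mono_of_mono (G.map c'.ι) (t.app _)
      -- every fork over `G.map f, G.map g` maps into the `R`-equaliser
      have hs : ∀ s : Fork (G.map f) (G.map g),
          (s.ι ≫ t.app (K.obj WalkingParallelPair.zero)) ≫ R.map f =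
            (s.ι ≫ t.app (K.obj WalkingParallelPair.zero)) ≫ R.map g := by
        intro s
        rw [Category.assoc, Category.assoc, ← t.naturality, ← t.naturality,
          ← Category.assoc, ← Category.assoc, s.condition]
      let q : ∀ s : Fork (G.map f) (G.map g), s.pt ⟶ R.obj c'.pt :=
        fun s => (Fork.IsLimit.lift' hRL _ (hs s)).1
      have hq : ∀ s, q s ≫ R.map c'.ι = s.ι ≫ t.app (K.obj WalkingParallelPair.zero) :=
        fun s => (Fork.IsLimit.lift' hRL _ (hs s)).2
      -- the mapped fork is a limit, via the pullback property
      have hGL : IsLimit (Fork.ofι (G.map c'.ι) (by simp only [← G.map_comp, c'.condition]) :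
          Fork (G.map f) (G.map g)) := by
        refine Fork.IsLimit.mk _ (fun s => P.lift s.ι (q s) (hq s).symm)
          (fun s => P.lift_fst _ _ _) (fun s m hm => ?_)
        refine (cancel_mono (G.map c'.ι)).1 ?_
        rw [P.lift_fst]
        exact hm
      exact ⟨((isLimitMapConeForkEquiv G c'.condition).symm hGL).ofIsoLimit
        ((Cones.functoriality _ G).mapIso (Fork.isoForkOfι c')).symm⟩
    exact preservesLimit_of_iso_diagram G (diagramIsoParallelPair K).symm
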